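/- For all d ≥ 2 and h ≥ 2, the minimum number of pebbles required to black-pebble the complete d-ary tree of height h is exactly (d-1)h - d + 2. -/

import Mathlib

/-! ## Fractional black-white pebbling -/

/-- A fractional pebble configuration: black and white pebble values on each node. -/
structure FConfig (V : Type) where
  b : V → ℝ
  w : V → ℝ

namespace FConfig

/-- Validity: all values nonnegative, total value of each node at most 1. -/
def Valid {V : Type} (C : FConfig V) : Prop :=
  ∀ v, 0 ≤ C.b v ∧ 0 ≤ C.w v ∧ C.b v + C.w v ≤ 1

/-- Total pebble weight of a configuration. -/
noncomputable def weight {V : Type} [Fintype V] (C : FConfig V) : ℝ :=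
  ∑ v, (C.b v + C.w v)

/-- The empty configuration. -/
def zero (V : Type) : FConfig V := ⟨fun _ => 0, fun _ => 0⟩

/-- A whole (non-fractional) configuration: all values 0 or 1. -/
def Whole {V : Type} (C : FConfig V) : Prop :=
  ∀ v, (C.b v = 0 ∨ C.b v = 1) ∧ (C.w v = 0 ∨ C.w v = 1)

/-- A black configuration: whole, and with no white pebbles. -/
def BlackOnly {V : Type} (C : FConfig V) : Prop :=
  C.Whole ∧ ∀ v, C.w v = 0

end FConfig

/-- One legal move of the fractional black-white pebble game (no white sliding):
(i) decrease a black value; (ii) increase a white value; (iii) if every child of `v`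
has total pebble value 1, decrease `w v` to 0 and/or increase `b v` arbitrarily while
simultaneously decreasing the black values of the children of `v` arbitrarily.
Here `child c v` means `c` is a child of `v`. -/
def FMove {V : Type} (child : V → V → Prop) (C C' : FConfig V) : Prop :=
  (∃ v, C'.b v ≤ C.b v ∧ C'.w v = C.w v ∧
     ∀ u, u ≠ v → C'.b u = C.b u ∧ C'.w u = C.w u) ∨
  (∃ v, C'.b v = C.b v ∧ C.w v ≤ C'.w v ∧
     ∀ u, u ≠ v → C'.b u = C.b u ∧ C'.w u = C.w u) ∨
  (∃ v, (∀ c, child c v → C.b c + C.w c = 1) ∧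
     C.b v ≤ C'.b v ∧ (C'.w v = 0 ∨ C'.w v = C.w v) ∧
     (∀ c, child c v → C'.b c ≤ C.b c ∧ C'.w c = C.w c) ∧
     (∀ u, u ≠ v → ¬ child u v → C'.b u = C.b u ∧ C'.w u = C.w u))

/-- The additional white sliding move: if `w v = 1`, `j` is a child of `v`, and every
child of `v` other than `j` has total pebble value 1, then set `w v = 0` and increase
`w j` so that `j` gets total pebble value 1. -/
def WhiteSlide {V : Type} (child : V → V → Prop) (C C' : FConfig V) : Prop :=
  ∃ v j, child j v ∧ j ≠ v ∧ C.w v = 1 ∧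
    (∀ c, child c v → c ≠ j → C.b c + C.w c = 1) ∧
    C'.w v = 0 ∧ C'.b v = C.b v ∧
    C'.b j = C.b j ∧ C.w j ≤ C'.w j ∧ C'.b j + C'.w j = 1 ∧
    (∀ u, u ≠ v → u ≠ j → C'.b u = C.b u ∧ C'.w u = C.w u)

/-- A pebbling of cost at most `p`, with moves given by `move`, all configurations
satisfying the extra constraint `Extra`, starting and ending with the empty
configuration and achieving `Goal` (a property of the whole sequence together with
its length). -/
def PebblingLE {V : Type} [Fintype V] (move : FConfig V → FConfig V → Prop)
    (Extra : FConfig V → Prop) (Goal : (ℕ → FConfig V) → ℕ → Prop) (p : ℝ) : Prop :=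
  ∃ (n : ℕ) (C : ℕ → FConfig V),
    C 0 = FConfig.zero V ∧ C n = FConfig.zero V ∧
    (∀ t ≤ n, (C t).Valid) ∧
    (∀ t ≤ n, Extra (C t)) ∧
    (∀ t < n, move (C t) (C (t + 1))) ∧
    Goal C n ∧
    (∀ t ≤ n, (C t).weight ≤ p)

/-! ## The complete `d`-ary tree of height `h` (with `h` levels) -/

/-- Nodes of the complete `d`-ary tree with `h` levels: a level `l < h`
together with an index among the `d ^ l` nodes of that level. -/
abbrev TNode (d h : ℕ) := Σ l : Fin h, Fin (d ^ (l : ℕ))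

/-- `c` is a child of `v` in the complete `d`-ary tree. -/
def IsChild (d h : ℕ) (c v : TNode d h) : Prop :=
  (c.1 : ℕ) = (v.1 : ℕ) + 1 ∧ ∃ j : Fin d, (c.2 : ℕ) = d * (v.2 : ℕ) + (j : ℕ)

/-- The root of the tree. -/
def troot (d h : ℕ) (hh : 0 < h) : TNode d h :=
  ⟨⟨0, hh⟩, ⟨0, by simp⟩⟩

/-- The tree `T_d^h` has a black pebbling of cost at most `p`. -/
def BlackPebbles (d h : ℕ) (hh : 0 < h) (p : ℝ) : Prop :=
  PebblingLE (FMove (IsChild d h)) FConfig.BlackOnly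
    (fun C n => ∃ t ≤ n, (C t).b (troot d h hh) = 1) p

/-- The tree `T_d^h` has a whole black-white pebbling (no white sliding)
of cost at most `p`. -/
def BWPebbles (d h : ℕ) (hh : 0 < h) (p : ℝ) : Prop :=
  PebblingLE (FMove (IsChild d h)) FConfig.Whole
    (fun C n => ∃ t ≤ n, (C t).b (troot d h hh) = 1) p

/-- The tree `T_d^h` has a fractional pebbling of cost at most `p`. -/
def FRPebbles (d h : ℕ) (hh : 0 < h) (p : ℝ) : Prop :=
  PebblingLE (FMove (IsChild d h)) (fun _ => True)
    (fun C n => ∃ t ≤ n, (C t).b (troot d h hh) = 1) p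

/-- Fractional pebbling of `T_d^h` where white sliding moves are also permitted. -/
def FRPebblesWS (d h : ℕ) (hh : 0 < h) (p : ℝ) : Prop :=
  PebblingLE (fun C C' => FMove (IsChild d h) C C' ∨ WhiteSlide (IsChild d h) C C')
    (fun _ => True)
    (fun C n => ∃ t ≤ n, (C t).b (troot d h hh) = 1) p

namespace BP

open Finset

variable {V : Type}

/-- The 0/1 configuration corresponding to a finite set of (black) pebbles. -/
def cfg [DecidableEq V] (s : Finset V) : FConfig V :=
  ⟨fun v => if v ∈ s then 1 else 0, fun _ => 0⟩

@[simp] lemma cfg_b [DecidableEq V] (s : Finset V) (u : V) :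
    (cfg s).b u = if u ∈ s then 1 else 0 := rfl

@[simp] lemma cfg_w [DecidableEq V] (s : Finset V) (u : V) : (cfg s).w u = 0 := rfl

lemma cfg_valid [DecidableEq V] (s : Finset V) : (cfg s).Valid := by
  intro v; simp only [cfg]; split <;> norm_num

lemma cfg_blackOnly [DecidableEq V] (s : Finset V) : (cfg s).BlackOnly := by
  refine ⟨fun v => ⟨?_, Or.inl rfl⟩, fun v => rfl⟩
  simp only [cfg]; split
  · exact Or.inr rfl
  · exact Or.inl rfl

lemma cfg_empty [DecidableEq V] : cfg (∅ : Finset V) = FConfig.zero V := by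
  simp [cfg, FConfig.zero]

lemma cfg_weight [DecidableEq V] [Fintype V] (s : Finset V) :
    (cfg s).weight = s.card := by
  simp [FConfig.weight, cfg, Finset.sum_ite_mem]

lemma cfg_b_one_iff [DecidableEq V] (s : Finset V) (u : V) :
    (cfg s).b u = 1 ↔ u ∈ s := by
  simp only [cfg_b]; split <;> simp_all

lemma cfg_b_le_iff [DecidableEq V] (s t : Finset V) (u : V) :
    (cfg t).b u ≤ (cfg s).b u ↔ (u ∈ t → u ∈ s) := by
  simp only [cfg_b]; split <;> split <;> simp_all <;> norm_num

lemma cfg_b_eq_iff [DecidableEq V] (s t : Finset V) (u : V) :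
    (cfg t).b u = (cfg s).b u ↔ (u ∈ t ↔ u ∈ s) := by
  simp only [cfg_b]; split <;> split <;> simp_all <;> norm_num

lemma cfg_bw_one_iff [DecidableEq V] (s : Finset V) (u : V) :
    (cfg s).b u + (cfg s).w u = 1 ↔ u ∈ s := by
  simp only [cfg_b, cfg_w, add_zero]; split <;> simp_all

lemma move_erase [DecidableEq V] (child : V → V → Prop) (s : Finset V) (x : V) :
    FMove child (cfg s) (cfg (s.erase x)) := by
  left
  refine ⟨x, ?_, rfl, fun u hu => ⟨?_, rfl⟩⟩
  · rw [cfg_b_le_iff]; simp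
  · rw [cfg_b_eq_iff]; simp [Finset.mem_erase, hu]

lemma move_insert [DecidableEq V] (child : V → V → Prop) (s : Finset V) (v : V)
    (hch : ∀ c, child c v → c ∈ s) :
    FMove child (cfg s) (cfg (insert v s)) := by
  right; right
  refine ⟨v, fun c hc => (cfg_bw_one_iff s c).2 (hch c hc), ?_, Or.inl rfl,
    fun c hc => ⟨?_, rfl⟩, fun u hu _ => ⟨?_, rfl⟩⟩
  · rw [cfg_b_le_iff]; intro h; exact Finset.mem_insert_of_mem h
  · rw [cfg_b_le_iff]; intro h
    rcases Finset.mem_insert.1 h with h | h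
    · exact h ▸ hch c hc
    · exact h
  · rw [cfg_b_eq_iff]; simp [Finset.mem_insert, hu]

lemma move_slide [DecidableEq V] (child : V → V → Prop) (s : Finset V) (v : V)
    (hch : ∀ c, child c v → c ∈ s) (hmem : ∀ u ∈ s, child u v)
    (hne : ∀ c, child c v → c ≠ v) :
    FMove child (cfg s) (cfg {v}) := by
  right; right
  refine ⟨v, fun c hc => (cfg_bw_one_iff s c).2 (hch c hc), ?_, Or.inl rfl,
    fun c hc => ⟨?_, rfl⟩, fun u hu hcu => ⟨?_, rfl⟩⟩
  · rw [cfg_b_le_iff]; intro _; exact Finset.mem_singleton_self v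
  · rw [cfg_b_le_iff]; intro hcs
    exact absurd (Finset.mem_singleton.1 hcs) (hne c hc)
  · rw [cfg_b_eq_iff]
    constructor
    · intro hus; exact absurd (Finset.mem_singleton.1 hus) hu
    · intro hus; exact absurd (hmem u hus) hcu

lemma move_union [DecidableEq V] {child : V → V → Prop} {s s' : Finset V}
    (m : FMove child (cfg s) (cfg s')) (E : Finset V) :
    FMove child (cfg (s ∪ E)) (cfg (s' ∪ E)) := by
  rcases m with ⟨x, h1, _, h3⟩ | ⟨x, h1, _, h3⟩ | ⟨x, h1, h2, _, h4, h5⟩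
  · left
    refine ⟨x, ?_, rfl, fun u hu => ⟨?_, rfl⟩⟩
    · rw [cfg_b_le_iff] at h1 ⊢
      simp only [Finset.mem_union]; tauto
    · rw [cfg_b_eq_iff] at *
      have := (h3 u hu).1
      rw [cfg_b_eq_iff] at this
      simp only [Finset.mem_union]; tauto
  · right; left
    refine ⟨x, ?_, le_refl _, fun u hu => ⟨?_, rfl⟩⟩
    · rw [cfg_b_eq_iff] at h1 ⊢
      simp only [Finset.mem_union]; tauto
    · have := (h3 u hu).1
      rw [cfg_b_eq_iff] at this ⊢
      simp only [Finset.mem_union]; tauto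
  · right; right
    refine ⟨x, fun c hc => ?_, ?_, Or.inl rfl, fun c hc => ⟨?_, rfl⟩,
      fun u hu hcu => ⟨?_, rfl⟩⟩
    · have := (cfg_bw_one_iff s c).1 (h1 c hc)
      exact (cfg_bw_one_iff _ c).2 (Finset.mem_union_left E this)
    · rw [cfg_b_le_iff] at h2 ⊢
      simp only [Finset.mem_union]; tauto
    · have := (h4 c hc).1
      rw [cfg_b_le_iff] at this ⊢
      simp only [Finset.mem_union]; tauto
    · have := (h5 u hu hcu).1
      rw [cfg_b_eq_iff] at this ⊢
      simp only [Finset.mem_union]; tauto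

/-- Reachability between pebble sets with invariant `P` and cost control built
into `P`. -/
def Reach [DecidableEq V] (child : V → V → Prop) (P : Finset V → Prop)
    (a b : Finset V) : Prop :=
  ∃ (n : ℕ) (f : ℕ → Finset V), f 0 = a ∧ f n = b ∧
    (∀ t < n, FMove child (cfg (f t)) (cfg (f (t + 1)))) ∧ (∀ t ≤ n, P (f t))

lemma Reach.mono [DecidableEq V] {child : V → V → Prop} {P Q : Finset V → Prop}
    {a b : Finset V} (hPQ : ∀ s, P s → Q s) (hr : Reach child P a b) :
    Reach child Q a b := by
  obtain ⟨n, f, h0, h1, h2, h3⟩ := hr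
  exact ⟨n, f, h0, h1, h2, fun t ht => hPQ _ (h3 t ht)⟩

lemma Reach.refl [DecidableEq V] {child : V → V → Prop} {P : Finset V → Prop}
    {a : Finset V} (ha : P a) : Reach child P a a :=
  ⟨0, fun _ => a, rfl, rfl, fun t ht => absurd ht (Nat.not_lt_zero t), fun _ _ => ha⟩

lemma Reach.single [DecidableEq V] {child : V → V → Prop} {P : Finset V → Prop}
    {a b : Finset V} (hm : FMove child (cfg a) (cfg b)) (ha : P a) (hb : P b) :
    Reach child P a b := by
  refine ⟨1, fun t => if t = 0 then a else b, by simp, by simp, ?_, ?_⟩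
  · intro t ht
    interval_cases t
    simpa using hm
  · intro t ht
    interval_cases t <;> simp [ha, hb]

lemma Reach.trans [DecidableEq V] {child : V → V → Prop} {P : Finset V → Prop}
    {a b c : Finset V} (h1 : Reach child P a b) (h2 : Reach child P b c) :
    Reach child P a c := by
  obtain ⟨n1, f1, e10, e11, m1, p1⟩ := h1
  obtain ⟨n2, f2, e20, e21, m2, p2⟩ := h2
  refine ⟨n1 + n2, fun t => if t ≤ n1 then f1 t else f2 (t - n1), by simp [e10], ?_, ?_, ?_⟩
  · dsimp only
    by_cases hn : n2 = 0
    · subst hn; simp only [add_zero, le_refl, if_pos]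
      rw [e11, ← e20, ← e21]
    · have : ¬ (n1 + n2 ≤ n1) := by omega
      rw [if_neg this]
      simpa using e21
  · intro t ht
    dsimp only
    by_cases h : t + 1 ≤ n1
    · rw [if_pos (by omega), if_pos h]
      exact m1 t (by omega)
    · by_cases h' : t ≤ n1
      · have ht1 : t = n1 := by omega
        subst ht1
        have hx : t + 1 - t = 1 := by omega
        rw [if_pos h', if_neg h, hx, e11, ← e20]
        exact m2 0 (by omega)
      · rw [if_neg h', if_neg h]
        have : t + 1 - n1 = (t - n1) + 1 := by omega
        rw [this]
        exact m2 (t - n1) (by omega)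
  · intro t ht
    dsimp only
    by_cases h : t ≤ n1
    · rw [if_pos h]; exact p1 t h
    · rw [if_neg h]; exact p2 (t - n1) (by omega)

lemma Reach.union [DecidableEq V] {child : V → V → Prop} {P : Finset V → Prop}
    {a b : Finset V} (hr : Reach child P a b) (E : Finset V) :
    Reach child (fun s => ∃ u, P u ∧ s = u ∪ E) (a ∪ E) (b ∪ E) := by
  obtain ⟨n, f, h0, h1, h2, h3⟩ := hr
  refine ⟨n, fun t => f t ∪ E, by simp only [h0], by simp only [h1], ?_, ?_⟩
  · intro t ht; exact move_union (h2 t ht) E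
  · intro t ht; exact ⟨f t, h3 t ht, rfl⟩

end BP

namespace BP

open Finset

/-- `u` lies in the subtree rooted at `v`. -/
def inSub (d h : ℕ) (v u : TNode d h) : Prop :=
  (v.1 : ℕ) ≤ (u.1 : ℕ) ∧ (u.2 : ℕ) / d ^ ((u.1 : ℕ) - (v.1 : ℕ)) = (v.2 : ℕ)

instance (d h : ℕ) (v u : TNode d h) : Decidable (inSub d h v u) := by
  unfold inSub; infer_instance

lemma inSub_refl (d h : ℕ) (v : TNode d h) : inSub d h v v := ⟨le_refl _, by simp⟩

lemma node_ext {d h : ℕ} {u v : TNode d h} (h1 : (u.1 : ℕ) = (v.1 : ℕ))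
    (h2 : (u.2 : ℕ) = (v.2 : ℕ)) : u = v := by
  obtain ⟨⟨a, ha⟩, ⟨x, hx⟩⟩ := u
  obtain ⟨⟨b, hb⟩, ⟨y, hy⟩⟩ := v
  have h1' : a = b := h1
  subst h1'
  have h2' : x = y := h2
  subst h2'
  rfl

lemma child_inSub {d h : ℕ} (hd : 0 < d) {c v : TNode d h} (hc : IsChild d h c v) :
    inSub d h v c := by
  obtain ⟨h1, j, h2⟩ := hc
  refine ⟨by omega, ?_⟩
  have : (c.1 : ℕ) - (v.1 : ℕ) = 1 := by omega
  rw [this, pow_one, h2, Nat.mul_add_div hd, Nat.div_eq_of_lt j.isLt, add_zero]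

lemma inSub_child_trans {d h : ℕ} (hd : 0 < d) {v c u : TNode d h}
    (hc : IsChild d h c v) (hu : inSub d h c u) : inSub d h v u := by
  obtain ⟨h1, j, h2⟩ := hc
  obtain ⟨h3, h4⟩ := hu
  refine ⟨by omega, ?_⟩
  have he : (u.1 : ℕ) - (v.1 : ℕ) = ((u.1 : ℕ) - (c.1 : ℕ)) + 1 := by omega
  rw [he, pow_succ, ← Nat.div_div_eq_div_mul, h4, h2, Nat.mul_add_div hd,
    Nat.div_eq_of_lt j.isLt, add_zero]

lemma inSub_unique {d h : ℕ} {c c' u : TNode d h} (hc : inSub d h c u)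
    (hc' : inSub d h c' u) (hl : (c.1 : ℕ) = (c'.1 : ℕ)) : c = c' := by
  refine node_ext hl ?_
  rw [← hc.2, ← hc'.2, hl]

/-- The `j`-th child of an internal node `v` (defined for `j < d`;
for larger `j` it clips). -/
def cnode (d h : ℕ) (hd : 0 < d) (v : TNode d h) (hlt : (v.1 : ℕ) + 1 < h)
    (j : ℕ) : TNode d h :=
  ⟨⟨(v.1 : ℕ) + 1, hlt⟩, ⟨d * (v.2 : ℕ) + min j (d - 1), by
    have h2 := v.2.isLt
    have h3 : d * ((v.2 : ℕ) + 1) = d * (v.2 : ℕ) + d := by ring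
    calc d * (v.2 : ℕ) + min j (d - 1) < d * ((v.2 : ℕ) + 1) := by omega
    _ ≤ d * d ^ (v.1 : ℕ) := Nat.mul_le_mul_left d h2
    _ = d ^ ((v.1 : ℕ) + 1) := by rw [pow_succ, Nat.mul_comm]⟩⟩

lemma cnode_fst (d h : ℕ) (hd : 0 < d) (v : TNode d h) (hlt : (v.1 : ℕ) + 1 < h)
    (j : ℕ) : ((cnode d h hd v hlt j).1 : ℕ) = (v.1 : ℕ) + 1 := rfl

lemma cnode_snd (d h : ℕ) (hd : 0 < d) (v : TNode d h) (hlt : (v.1 : ℕ) + 1 < h)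
    {j : ℕ} (hj : j < d) : ((cnode d h hd v hlt j).2 : ℕ) = d * (v.2 : ℕ) + j := by
  simp only [cnode]
  congr 1
  omega

lemma cnode_child (d h : ℕ) (hd : 0 < d) (v : TNode d h) (hlt : (v.1 : ℕ) + 1 < h)
    {j : ℕ} (hj : j < d) : IsChild d h (cnode d h hd v hlt j) v :=
  ⟨rfl, ⟨⟨j, hj⟩, cnode_snd d h hd v hlt hj⟩⟩

lemma cnode_inj (d h : ℕ) (hd : 0 < d) (v : TNode d h) (hlt : (v.1 : ℕ) + 1 < h)
    {j j' : ℕ} (hj : j < d) (hj' : j' < d)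
    (he : cnode d h hd v hlt j = cnode d h hd v hlt j') : j = j' := by
  have := congrArg (fun u : TNode d h => (u.2 : ℕ)) he
  rw [cnode_snd d h hd v hlt hj, cnode_snd d h hd v hlt hj'] at this
  omega

lemma child_eq_cnode {d h : ℕ} (hd : 0 < d) {v : TNode d h} (hlt : (v.1 : ℕ) + 1 < h)
    {c : TNode d h} (hc : IsChild d h c v) :
    ∃ j : ℕ, j < d ∧ c = cnode d h hd v hlt j := by
  obtain ⟨h1, j, h2⟩ := hc
  exact ⟨(j : ℕ), j.isLt, node_ext (by rw [h1, cnode_fst])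
    (by rw [h2, cnode_snd d h hd v hlt j.isLt])⟩

lemma child_ne {d h : ℕ} {c v : TNode d h} (hc : IsChild d h c v) : c ≠ v := by
  intro he
  have := hc.1
  rw [he] at this
  omega

lemma no_child_of_leaf {d h : ℕ} {v : TNode d h} (hv : (v.1 : ℕ) + 1 = h)
    {c : TNode d h} (hc : IsChild d h c v) : False := by
  have h1 := hc.1
  have h2 := c.1.isLt
  omega

end BP

namespace BP

open Finset

lemma strat (d h : ℕ) (hd : 2 ≤ d) :
    ∀ k : ℕ, ∀ v : TNode d h, (v.1 : ℕ) + k + 1 = h →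
      Reach (IsChild d h)
        (fun s => (∀ u ∈ s, inSub d h v u) ∧ s.card ≤ (d - 1) * k + 1)
        ∅ {v} := by
  have hd0 : 0 < d := by omega
  intro k
  induction k with
  | zero =>
    intro v hv
    have hm : FMove (IsChild d h) (cfg (∅ : Finset (TNode d h))) (cfg {v}) := by
      have := move_insert (IsChild d h) (∅ : Finset (TNode d h)) v
        (fun c hc => absurd hc (fun hc => no_child_of_leaf (by omega) hc))
      simpa using this
    refine Reach.single hm ⟨by simp, by simp⟩ ⟨?_, by simp⟩
    intro u hu
    rw [Finset.mem_singleton] at hu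
    subst hu
    exact inSub_refl _ _ _
  | succ k ih =>
    intro v hv
    have hlt : (v.1 : ℕ) + 1 < h := by omega
    set c : ℕ → TNode d h := fun j => cnode d h hd0 v hlt j with hc
    set E : ℕ → Finset (TNode d h) := fun i => (Finset.range i).image c with hE
    have hEsub : ∀ i ≤ d, ∀ u ∈ E i, inSub d h v u := by
      intro i hi u hu
      rw [hE] at hu
      simp only [Finset.mem_image, Finset.mem_range] at hu
      obtain ⟨j, hj, rfl⟩ := hu
      exact child_inSub hd0 (cnode_child d h hd0 v hlt (by omega))
    have hEcard : ∀ i, (E i).card ≤ i := fun i =>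
      le_trans Finset.card_image_le (le_of_eq (Finset.card_range i))
    have inner : ∀ i ≤ d, Reach (IsChild d h)
        (fun s => (∀ u ∈ s, inSub d h v u) ∧ s.card ≤ (d - 1) * (k + 1) + 1)
        ∅ (E i) := by
      intro i
      induction i with
      | zero =>
        intro _
        have : E 0 = ∅ := by simp [hE]
        rw [this]
        exact Reach.refl ⟨by simp, by simp⟩
      | succ i ih2 =>
        intro hi
        refine (ih2 (by omega)).trans ?_
        have hci : IsChild d h (c i) v := cnode_child d h hd0 v hlt (by omega)
        have hchild := ih (c i) (by rw [hc]; simp only [cnode_fst]; omega)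
        have hun := hchild.union (E i)
        have he0 : (∅ : Finset (TNode d h)) ∪ E i = E i := Finset.empty_union _
        have he1 : {c i} ∪ E i = E (i + 1) := by
          rw [hE]
          simp only [Finset.range_add_one, Finset.image_insert]
          rw [Finset.insert_eq]
        rw [he0, he1] at hun
        refine hun.mono ?_
        rintro s ⟨u, ⟨hu1, hu2⟩, rfl⟩
        constructor
        · intro x hx
          rcases Finset.mem_union.1 hx with hx | hx
          · exact inSub_child_trans hd0 hci (hu1 x hx)
          · exact hEsub i (by omega) x hx
        · calc (u ∪ E i).card ≤ u.card + (E i).card := Finset.card_union_le u (E i)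
          _ ≤ ((d - 1) * k + 1) + i := by
              have := hEcard i
              omega
          _ ≤ (d - 1) * (k + 1) + 1 := by
              have h1 : (d - 1) * (k + 1) = (d - 1) * k + (d - 1) := by ring
              omega
    refine (inner d le_rfl).trans (Reach.single ?_ ?_ ?_)
    · refine move_slide (IsChild d h) (E d) v ?_ ?_ ?_
      · intro x hx
        obtain ⟨j, hj, rfl⟩ := child_eq_cnode hd0 hlt hx
        rw [hE]
        exact Finset.mem_image.2 ⟨j, Finset.mem_range.2 hj, rfl⟩
      · intro x hx
        rw [hE] at hx
        simp only [Finset.mem_image, Finset.mem_range] at hx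
        obtain ⟨j, hj, rfl⟩ := hx
        exact cnode_child d h hd0 v hlt hj
      · intro x hx
        exact child_ne hx
    · refine ⟨hEsub d le_rfl, ?_⟩
      have := hEcard d
      have h1 : d - 1 ≤ (d - 1) * (k + 1) := Nat.le_mul_of_pos_right _ (by omega)
      omega
    · refine ⟨?_, by simp⟩
      intro u hu
      rw [Finset.mem_singleton] at hu
      subst hu
      exact inSub_refl _ _ _

end BP

namespace BP

open Finset

lemma lb_main (d h : ℕ) (hd : 2 ≤ d) (P : ℕ → Finset (TNode d h)) (n : ℕ)
    (key : ∀ t < n, ∀ u, u ∈ P (t + 1) → u ∉ P t → ∀ c, IsChild d h c u → c ∈ P t) :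
    ∀ m : ℕ, ∀ v : TNode d h, (v.1 : ℕ) + m = h → ∀ t0 t1, t0 ≤ t1 → t1 ≤ n →
      (∀ u, inSub d h v u → u ∉ P t0) → v ∈ P t1 →
      ∃ t, t0 ≤ t ∧ t ≤ t1 ∧
        (d - 1) * (m - 1) + 1 ≤ ((P t).filter (fun u => inSub d h v u)).card := by
  classical
  have hd0 : 0 < d := by omega
  intro m
  induction m with
  | zero =>
    intro v hv
    have := v.1.isLt
    omega
  | succ m ih =>
    intro v hv t0 t1 h01 h1n hempty hv1
    rcases Nat.eq_zero_or_pos m with hm0 | hm1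
    · -- base case : just find one pebble in the subtree
      subst hm0
      refine ⟨t1, h01, le_refl _, ?_⟩
      have : v ∈ (P t1).filter (fun u => inSub d h v u) :=
        Finset.mem_filter.2 ⟨hv1, inSub_refl d h v⟩
      have := Finset.card_pos.2 ⟨v, this⟩
      omega
    · -- inductive step
      have hlt : (v.1 : ℕ) + 1 < h := by omega
      set c : ℕ → TNode d h := fun j => cnode d h hd0 v hlt j with hcdef
      -- the first time v is pebbled after t0
      have hex : ∃ s, v ∈ P (t0 + s) ∧ t0 + s ≤ t1 :=
        ⟨t1 - t0, by rwa [Nat.add_sub_cancel' h01], by omega⟩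
      set sstar := Nat.find hex with hsstar
      obtain ⟨hfs1, hfs2⟩ := Nat.find_spec hex
      set tstar := t0 + sstar with htstar
      have hs0 : sstar ≠ 0 := by
        intro h0
        apply hempty v (inSub_refl d h v)
        rw [htstar, h0, add_zero] at hfs1
        exact hfs1
      have hmin : ∀ t, t0 ≤ t → t < tstar → v ∉ P t := by
        intro t ha hb hvP
        exact Nat.find_min hex (show t - t0 < sstar by omega)
          ⟨by rwa [Nat.add_sub_cancel' ha], by omega⟩
      have htn : tstar - 1 < n := by omega
      have htt : tstar - 1 + 1 = tstar := by omega
      have hch : ∀ j, j < d → c j ∈ P (tstar - 1) := by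
        intro j hj
        refine key (tstar - 1) htn v ?_ (hmin (tstar - 1) (by omega) (by omega))
          (c j) (cnode_child d h hd0 v hlt hj)
        rw [htt]; exact hfs1
      -- for each child j, the last empty time and the IH
      set emptyS : ℕ → ℕ → Prop :=
        fun j t => ∀ u, inSub d h (c j) u → u ∉ P t with hemptyS
      set vj : ℕ → ℕ := fun j => Nat.findGreatest (emptyS j) (tstar - 1) with hvj
      have ht0t : t0 ≤ tstar - 1 := by omega
      have hjchild : ∀ j, j < d → IsChild d h (c j) v :=
        fun j hj => cnode_child d h hd0 v hlt hj
      have he_t0 : ∀ j, j < d → emptyS j t0 := by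
        intro j hj u hu
        exact hempty u (inSub_child_trans hd0 (hjchild j hj) hu)
      have hvj_ge : ∀ j, j < d → t0 ≤ vj j :=
        fun j hj => Nat.le_findGreatest ht0t (he_t0 j hj)
      have hvj_le : ∀ j, vj j ≤ tstar - 1 := fun j => Nat.findGreatest_le _
      have hvj_spec : ∀ j, j < d → emptyS j (vj j) :=
        fun j hj => Nat.findGreatest_spec ht0t (he_t0 j hj)
      have hvj_max : ∀ j, ∀ t, vj j < t → t ≤ tstar - 1 → ¬ emptyS j t :=
        fun j t h1 h2 => Nat.findGreatest_is_greatest h1 h2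
      have H : ∀ j, j < d → ∃ τ, vj j ≤ τ ∧ τ ≤ tstar - 1 ∧
          (d - 1) * (m - 1) + 1 ≤ ((P τ).filter (fun u => inSub d h (c j) u)).card := by
        intro j hj
        have hex2 : ∃ s, c j ∈ P (vj j + s) ∧ vj j + s ≤ tstar - 1 :=
          ⟨tstar - 1 - vj j, by rw [Nat.add_sub_cancel' (hvj_le j)]; exact hch j hj,
            by have := hvj_le j; omega⟩
        obtain ⟨hr1, hr2⟩ := Nat.find_spec hex2
        obtain ⟨τ, ha, hb, hc2⟩ := ih (c j)
          (by rw [hcdef]; simp only [cnode_fst]; omega)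
          (vj j) (vj j + Nat.find hex2) (by omega) (by omega)
          (hvj_spec j hj) hr1
        exact ⟨τ, ha, by omega, hc2⟩
      -- maximize vj
      obtain ⟨js, hjs_mem, hjs_max⟩ := Finset.exists_max_image (Finset.range d) vj
        ⟨0, Finset.mem_range.2 (by omega)⟩
      have hjs : js < d := Finset.mem_range.1 hjs_mem
      obtain ⟨τ, hτ1, hτ2, hτ3⟩ := H js hjs
      have hτgt : vj js < τ := by
        rcases Nat.lt_or_ge (vj js) τ with h' | h'
        · exact h'
        · exfalso
          have hττ : τ = vj js := by omega
          have hpos : 0 < ((P τ).filter (fun u => inSub d h (c js) u)).card := by omega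
          obtain ⟨u, hu⟩ := Finset.card_pos.1 hpos
          rw [Finset.mem_filter] at hu
          exact hvj_spec js hjs u hu.2 (hττ ▸ hu.1)
      have hne : ∀ j, j < d → ∃ u, u ∈ P τ ∧ inSub d h (c j) u := by
        intro j hj
        have h1 : vj j < τ := lt_of_le_of_lt (hjs_max j (Finset.mem_range.2 hj)) hτgt
        have h2 := hvj_max j τ h1 hτ2
        rw [hemptyS] at h2
        by_contra hcon
        push_neg at hcon
        exact h2 (fun u hu hP => hcon u hP hu)
      -- counting
      set A : ℕ → Finset (TNode d h) :=
        fun j => (P τ).filter (fun u => inSub d h (c j) u) with hA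
      have hdisj : ∀ j ∈ Finset.range d, ∀ j' ∈ Finset.range d, j ≠ j' →
          Disjoint (A j) (A j') := by
        intro j hj j' hj' hjj'
        rw [Finset.disjoint_left]
        intro u hu hu'
        rw [hA, Finset.mem_filter] at hu hu'
        have hcc : c j = c j' := inSub_unique hu.2 hu'.2 (by rw [hcdef]; rfl)
        exact hjj' (cnode_inj d h hd0 v hlt (Finset.mem_range.1 hj)
          (Finset.mem_range.1 hj') hcc)
      have hsub : (Finset.range d).biUnion A ⊆
          (P τ).filter (fun u => inSub d h v u) := by
        intro u hu
        rw [Finset.mem_biUnion] at hu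
        obtain ⟨j, hj, hu⟩ := hu
        rw [hA, Finset.mem_filter] at hu
        exact Finset.mem_filter.2
          ⟨hu.1, inSub_child_trans hd0 (hjchild j (Finset.mem_range.1 hj)) hu.2⟩
      have hcard1 : ∑ j ∈ Finset.range d, (A j).card ≤
          ((P τ).filter (fun u => inSub d h v u)).card := by
        rw [← Finset.card_biUnion hdisj]
        exact Finset.card_le_card hsub
      have hsplit : (A js).card + ∑ j ∈ (Finset.range d).erase js, (A j).card =
          ∑ j ∈ Finset.range d, (A j).card :=
        Finset.add_sum_erase (Finset.range d) (fun j => (A j).card) hjs_mem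
      have hones : (d - 1) ≤ ∑ j ∈ (Finset.range d).erase js, (A j).card := by
        have : ∀ j ∈ (Finset.range d).erase js, 1 ≤ (A j).card := by
          intro j hj
          obtain ⟨u, hu1, hu2⟩ := hne j (Finset.mem_range.1 (Finset.mem_of_mem_erase hj))
          exact Finset.card_pos.2 ⟨u, Finset.mem_filter.2 ⟨hu1, hu2⟩⟩
        calc (d - 1) = ((Finset.range d).erase js).card := by
              rw [Finset.card_erase_of_mem hjs_mem, Finset.card_range]
        _ = ∑ _j ∈ (Finset.range d).erase js, 1 := by rw [Finset.sum_const, smul_eq_mul, mul_one]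
        _ ≤ _ := Finset.sum_le_sum this
      have harith : (d - 1) * (m - 1) + (d - 1) = (d - 1) * m := by
        obtain ⟨m', rfl⟩ : ∃ m', m = m' + 1 := ⟨m - 1, by omega⟩
        simp [Nat.mul_succ]
      refine ⟨τ, by have := hvj_ge js hjs; omega, by omega, ?_⟩
      have : (d - 1) * (m - 1) + 1 ≤ (A js).card := hτ3
      simp only [Nat.add_sub_cancel]
      omega

end BP

namespace BP

open Finset

lemma cast_bound (d h : ℕ) (hd : 2 ≤ d) (hh : 2 ≤ h) :
    (((d - 1) * (h - 1) + 1 : ℕ) : ℝ) = ((d : ℝ) - 1) * h - d + 2 := by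
  have h1 : (1 : ℕ) ≤ d := by omega
  have h2 : (1 : ℕ) ≤ h := by omega
  push_cast [Nat.cast_sub h1, Nat.cast_sub h2]
  ring

lemma upper (d h : ℕ) (hd : 2 ≤ d) (hh : 2 ≤ h) (hh0 : 0 < h) :
    BlackPebbles d h hh0 (((d : ℝ) - 1) * h - d + 2) := by
  have hr : ((troot d h hh0).1 : ℕ) + (h - 1) + 1 = h := by
    have : ((troot d h hh0).1 : ℕ) = 0 := rfl
    omega
  obtain ⟨n, f, h0, h1, hm, hP⟩ := strat d h hd (h - 1) (troot d h hh0) hr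
  unfold BlackPebbles PebblingLE
  refine ⟨n + 1, fun t => cfg (if t ≤ n then f t else ∅), ?_, ?_, ?_, ?_, ?_, ?_, ?_⟩
  · show cfg (if 0 ≤ n then f 0 else ∅) = _
    rw [if_pos (Nat.zero_le n), h0, cfg_empty]
  · show cfg (if n + 1 ≤ n then f (n + 1) else ∅) = _
    rw [if_neg (by omega), cfg_empty]
  · intro t _; exact cfg_valid _
  · intro t _; exact cfg_blackOnly _
  · intro t ht
    dsimp only
    by_cases htn : t < n
    · rw [if_pos (by omega), if_pos (by omega)]
      exact hm t htn
    · have hteq : t = n := by omega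
      subst hteq
      rw [if_pos le_rfl, if_neg (by omega), h1]
      have := move_erase (IsChild d h) {troot d h hh0} (troot d h hh0)
      rwa [Finset.erase_singleton] at this
  · refine ⟨n, by omega, ?_⟩
    show (cfg (if n ≤ n then f n else ∅)).b _ = 1
    rw [if_pos le_rfl, h1, cfg_b_one_iff]
    exact Finset.mem_singleton_self _
  · intro t _
    show (cfg (if t ≤ n then f t else ∅)).weight ≤ _
    rw [cfg_weight]
    split_ifs with hsp
    · exact le_trans (Nat.cast_le.2 (hP t hsp).2) (le_of_eq (cast_bound d h hd hh))
    · simp only [Finset.card_empty, Nat.cast_zero]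
      rw [← cast_bound d h hd hh]
      positivity

lemma lower (d h : ℕ) (hd : 2 ≤ d) (hh : 2 ≤ h) (hh0 : 0 < h) (p : ℝ)
    (hp : BlackPebbles d h hh0 p) : ((d : ℝ) - 1) * h - d + 2 ≤ p := by
  classical
  obtain ⟨n, C, h0, h1, hval, hext, hmove, ⟨tg, htg, hroot⟩, hwt⟩ := hp
  set P : ℕ → Finset (TNode d h) :=
    fun t => Finset.univ.filter (fun u => (C t).b u = 1) with hPdef
  have hmem : ∀ t u, u ∈ P t ↔ (C t).b u = 1 := by
    intro t u; simp [hPdef]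
  have key : ∀ t < n, ∀ u, u ∈ P (t + 1) → u ∉ P t →
      ∀ c, IsChild d h c u → c ∈ P t := by
    intro t ht u hu1 hu2 c hc
    rw [hmem] at hu1
    rw [hmem]
    have hbo := hext t (by omega)
    rcases hmove t ht with ⟨x, hb, hw, ho⟩ | ⟨x, hb, hw, ho⟩ |
      ⟨x, h1', h2', h3', h4', h5'⟩
    · exfalso
      apply hu2
      rw [hmem]
      by_cases hux : u = x
      · subst hux
        obtain ⟨hb0, hw0, hbw⟩ := hval t (by omega) u
        have : (1 : ℝ) ≤ (C t).b u := by rw [← hu1]; exact hb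
        linarith
      · rw [← (ho u hux).1]; exact hu1
    · exfalso
      apply hu2
      rw [hmem]
      by_cases hux : u = x
      · subst hux; rw [← hb]; exact hu1
      · rw [← (ho u hux).1]; exact hu1
    · by_cases hux : u = x
      · subst hux
        have hc1 := h1' c hc
        have hw0 := hbo.2 c
        linarith
      · exfalso
        apply hu2
        rw [hmem]
        by_cases hcu : IsChild d h u x
        · have hle := (h4' u hcu).1
          obtain ⟨hb0, hw0, hbw⟩ := hval t (by omega) u
          have : (1 : ℝ) ≤ (C t).b u := by rw [← hu1]; exact hle
          linarith
        · rw [← (h5' u hux hcu).1]; exact hu1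
  obtain ⟨t, ht0, ht1, hcard⟩ := lb_main d h hd P n key h (troot d h hh0)
    (by have : ((troot d h hh0).1 : ℕ) = 0 := rfl; omega)
    0 tg (Nat.zero_le tg) htg
    (by
      intro u _ hu
      rw [hmem, h0] at hu
      simp [FConfig.zero] at hu)
    (by rw [hmem]; exact hroot)
  have htn : t ≤ n := le_trans ht1 htg
  set S := (P t).filter (fun u => inSub d h (troot d h hh0) u) with hS
  have hwge : (S.card : ℝ) ≤ (C t).weight := by
    have hstep1 : (S.card : ℝ) = ∑ _u ∈ S, (1 : ℝ) := by simp
    have hstep2 : ∑ _u ∈ S, (1 : ℝ) ≤ ∑ u ∈ S, ((C t).b u + (C t).w u) := by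
      refine Finset.sum_le_sum ?_
      intro u hu
      rw [hS, Finset.mem_filter, hmem] at hu
      obtain ⟨hb0, hw0, hbw⟩ := hval t htn u
      rw [hu.1]
      linarith
    have hstep3 : ∑ u ∈ S, ((C t).b u + (C t).w u) ≤ (C t).weight := by
      refine Finset.sum_le_sum_of_subset_of_nonneg (Finset.subset_univ S) ?_
      intro u _ _
      obtain ⟨hb0, hw0, _⟩ := hval t htn u
      linarith
    linarith
  have hcast : (((d - 1) * (h - 1) + 1 : ℕ) : ℝ) ≤ (S.card : ℝ) :=
    Nat.cast_le.2 hcard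
  have := hwt t htn
  rw [cast_bound d h hd hh] at hcast
  linarith

end BP

theorem blackPebbles_tree_eq (d h : ℕ) (hd : 2 ≤ d) (hh : 2 ≤ h) :
    BlackPebbles d h (by omega) (((d : ℝ) - 1) * h - d + 2) ∧
    ∀ p : ℝ, BlackPebbles d h (by omega) p → ((d : ℝ) - 1) * h - d + 2 ≤ p :=
  ⟨BP.upper d h hd hh (by omega), fun p hp => BP.lower d h hd hh (by omega) p hp⟩
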